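/- arXiv:1205.2876 — 2 statements merged into one kernel-verified Lean document; each statement's English description precedes it below -/
import Mathlib

section
/- Fix m ∈ ℕ and let a_m := inf_{h∈(0,1)} f_{m+1}(h)/f_m(h). Then for all n ≥ m and all h ∈ [0,1], a_m^{n−m} · f_m(h) ≤ f_n(h). -/
/-- The polynomials `f_n : [0,1] → ℝ` defined by `f_0(h) = h(1-h)` and
`f_n(h) = (f_{n-1}(h^2) + f_{n-1}(1-(1-h)^2))/2`. -/
noncomputable def f : ℕ → ℝ → ℝ
  | 0, h => h * (1 - h)
  | n + 1, h => (f n (h ^ 2) + f n (1 - (1 - h) ^ 2)) / 2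

/-- `a_m := inf_{h ∈ (0,1)} f_{m+1}(h) / f_m(h)`. -/
noncomputable def a (m : ℕ) : ℝ :=
  sInf ((fun h => f (m + 1) h / f m h) '' Set.Ioo (0 : ℝ) 1)

lemma sq_mem_Icc {h : ℝ} (hh : h ∈ Set.Icc (0 : ℝ) 1) :
    h ^ 2 ∈ Set.Icc (0 : ℝ) 1 := by
  obtain ⟨h0, h1⟩ := hh
  constructor <;> nlinarith

lemma refl_mem_Icc {h : ℝ} (hh : h ∈ Set.Icc (0 : ℝ) 1) :
    1 - (1 - h) ^ 2 ∈ Set.Icc (0 : ℝ) 1 := by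
  obtain ⟨h0, h1⟩ := hh
  constructor <;> nlinarith

lemma sq_mem_Ioo {h : ℝ} (hh : h ∈ Set.Ioo (0 : ℝ) 1) :
    h ^ 2 ∈ Set.Ioo (0 : ℝ) 1 := by
  obtain ⟨h0, h1⟩ := hh
  constructor <;> nlinarith

lemma refl_mem_Ioo {h : ℝ} (hh : h ∈ Set.Ioo (0 : ℝ) 1) :
    1 - (1 - h) ^ 2 ∈ Set.Ioo (0 : ℝ) 1 := by
  obtain ⟨h0, h1⟩ := hh
  constructor <;> nlinarith

lemma f_pos (n : ℕ) : ∀ h ∈ Set.Ioo (0 : ℝ) 1, 0 < f n h := by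
  induction n with
  | zero =>
    intro h ⟨h0, h1⟩
    simp only [f]
    nlinarith
  | succ n ih =>
    intro h hh
    simp only [f]
    have := ih _ (sq_mem_Ioo hh)
    have := ih _ (refl_mem_Ioo hh)
    linarith

lemma f_at_zero (n : ℕ) : f n 0 = 0 := by
  induction n with
  | zero => simp [f]
  | succ n ih => norm_num [f, ih]

lemma f_at_one (n : ℕ) : f n 1 = 0 := by
  induction n with
  | zero => simp [f]
  | succ n ih => norm_num [f, ih]

lemma a_nonneg (m : ℕ) : 0 ≤ a m := by
  apply Real.sInf_nonneg
  rintro x ⟨h, hh, rfl⟩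
  exact le_of_lt (div_pos (f_pos _ _ hh) (f_pos _ _ hh))

lemma a_le (m : ℕ) {h : ℝ} (hh : h ∈ Set.Ioo (0 : ℝ) 1) :
    a m ≤ f (m + 1) h / f m h := by
  apply csInf_le
  · refine ⟨0, ?_⟩
    rintro x ⟨h', hh', rfl⟩
    exact le_of_lt (div_pos (f_pos _ _ hh') (f_pos _ _ hh'))
  · exact ⟨h, hh, rfl⟩

lemma key (m : ℕ) : ∀ n, m ≤ n → ∀ h ∈ Set.Icc (0 : ℝ) 1,
    a m * f n h ≤ f (n + 1) h := by
  intro n hn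
  induction n, hn using Nat.le_induction with
  | base =>
    intro h hh
    rcases eq_or_lt_of_le hh.1 with h0 | h0
    · rw [← h0, f_at_zero, f_at_zero, mul_zero]
    rcases eq_or_lt_of_le hh.2 with h1 | h1
    · rw [h1, f_at_one, f_at_one, mul_zero]
    have hio : h ∈ Set.Ioo (0 : ℝ) 1 := ⟨h0, h1⟩
    have := a_le m hio
    rw [le_div_iff₀ (f_pos _ _ hio)] at this
    exact this
  | succ n hn ih =>
    intro h hh
    have h1 := ih _ (sq_mem_Icc hh)
    have h2 := ih _ (refl_mem_Icc hh)
    show a m * ((f n (h ^ 2) + f n (1 - (1 - h) ^ 2)) / 2) ≤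
      (f (n + 1) (h ^ 2) + f (n + 1) (1 - (1 - h) ^ 2)) / 2
    linarith

/-- For all `n ≥ m` and `h ∈ [0,1]`, `a_m^(n-m) · f_m(h) ≤ f_n(h)`. -/
theorem f_lower_bound (m : ℕ) :
    ∀ n ≥ m, ∀ h ∈ Set.Icc (0 : ℝ) 1, a m ^ (n - m) * f m h ≤ f n h := by
  intro n hn
  induction n, hn using Nat.le_induction with
  | base => intro h hh; simp
  | succ n hn ih =>
    intro h hh
    rw [Nat.succ_sub hn, pow_succ]
    calc a m ^ (n - m) * a m * f m h = a m * (a m ^ (n - m) * f m h) := by ring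
      _ ≤ a m * f n h := mul_le_mul_of_nonneg_left (ih h hh) (a_nonneg m)
      _ ≤ f (n + 1) h := key m n hn h hh
end

section
/- Let X be a random variable on a probability space taking values in [0,1], let I := E[1−X], and suppose E[X(1−X)] ≥ γ·t for some γ > 0 and t ∈ (0,1]. Then for any α, β ≥ 0 with 2α + β = γ one has P(X ≤ α·t) ≤ I − β·t. -/
open MeasureTheory

/-- Let `X` take values in `[0,1]` on a probability space, let `I := E[1-X]`, and suppose
`E[X(1-X)] ≥ γ·t` with `γ > 0` and `t ∈ (0,1]`. Then for `α, β ≥ 0` with `2α + β = γ`,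
`P(X ≤ α·t) ≤ I - β·t`. -/
theorem prob_small_entropy_bound {Ω : Type*} [MeasurableSpace Ω] (μ : Measure Ω)
    [IsProbabilityMeasure μ] (X : Ω → ℝ) (hXmeas : Measurable X)
    (hX01 : ∀ᵐ ω ∂μ, X ω ∈ Set.Icc (0 : ℝ) 1)
    (γ t : ℝ) (hγ : 0 < γ) (ht : t ∈ Set.Ioc (0 : ℝ) 1)
    (hE : γ * t ≤ ∫ ω, X ω * (1 - X ω) ∂μ)
    (α β : ℝ) (hα : 0 ≤ α) (hβ : 0 ≤ β) (hsum : 2 * α + β = γ) :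
    (μ {ω | X ω ≤ α * t}).toReal ≤ (∫ ω, (1 - X ω) ∂μ) - β * t := by
  obtain ⟨ht0, ht1⟩ := ht
  set A : Set Ω := {ω | X ω ≤ α * t} with hA
  have hAm : MeasurableSet A := measurableSet_le hXmeas measurable_const
  have hXint : Integrable X μ := by
    apply Integrable.mono' (integrable_const (1:ℝ)) hXmeas.aestronglyMeasurable
    filter_upwards [hX01] with ω hω
    rw [Real.norm_eq_abs, abs_le]
    exact ⟨by linarith [hω.1], hω.2⟩
  have hfint : Integrable (fun ω => X ω * (1 - X ω)) μ := by
    apply Integrable.mono' (integrable_const (1:ℝ))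
      (hXmeas.mul (measurable_const.sub hXmeas)).aestronglyMeasurable
    filter_upwards [hX01] with ω hω
    rw [Real.norm_eq_abs, abs_le]
    constructor <;> simp only [Pi.mul_apply, Pi.sub_apply] <;> nlinarith [hω.1, hω.2]
  have hgint : Integrable (fun ω => (1:ℝ) - X ω) μ := (integrable_const 1).sub hXint
  have hp0 : 0 ≤ (μ A).toReal := ENNReal.toReal_nonneg
  have hp1 : (μ A).toReal ≤ 1 := by
    have h : μ A ≤ 1 := prob_le_one
    simpa using ENNReal.toReal_mono ENNReal.one_ne_top h
  have hsplitf : (∫ ω in A, X ω * (1 - X ω) ∂μ) + (∫ ω in Aᶜ, X ω * (1 - X ω) ∂μ)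
      = ∫ ω, X ω * (1 - X ω) ∂μ := integral_add_compl hAm hfint
  have hsplitg : (∫ ω in A, (1 - X ω) ∂μ) + (∫ ω in Aᶜ, (1 - X ω) ∂μ)
      = ∫ ω, (1 - X ω) ∂μ := integral_add_compl hAm hgint
  have h1 : (∫ ω in A, X ω * (1 - X ω) ∂μ) ≤ α * t * (μ A).toReal := by
    have : (∫ ω in A, X ω * (1 - X ω) ∂μ) ≤ ∫ _ω in A, α * t ∂μ := by
      apply setIntegral_mono_on_ae hfint.integrableOn (integrable_const _).integrableOn hAm
      filter_upwards [hX01] with ω hω hωA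
      have hωA' : X ω ≤ α * t := hωA
      nlinarith [hω.1, hω.2]
    simpa [integral_const, mul_comm, measureReal_def] using this
  have h2 : (∫ ω in Aᶜ, X ω * (1 - X ω) ∂μ) ≤ ∫ ω in Aᶜ, (1 - X ω) ∂μ := by
    apply setIntegral_mono_on_ae hfint.integrableOn hgint.integrableOn hAm.compl
    filter_upwards [hX01] with ω hω _
    nlinarith [hω.1, hω.2]
  have h3 : (1 - α * t) * (μ A).toReal ≤ ∫ ω in A, (1 - X ω) ∂μ := by
    have : (∫ _ω in A, (1 - α * t) ∂μ) ≤ ∫ ω in A, (1 - X ω) ∂μ := by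
      apply setIntegral_mono_on_ae (integrable_const _).integrableOn hgint.integrableOn hAm
      filter_upwards [hX01] with ω hω hωA
      have hωA' : X ω ≤ α * t := hωA
      linarith
    simpa [integral_const, mul_comm, measureReal_def] using this
  nlinarith [mul_nonneg hα ht0.le,
    mul_nonneg (mul_nonneg hα ht0.le) (sub_nonneg.mpr hp1)]
end
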